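/- Fix distinct i, j ∈ {2, …, N}. Let h_i, h_j ∈ 𝓡 depend only on the variables v_{x^α} with α ≥ 1; set g_i := δh_i/δv_x, g_j := δh_j/δv_x, L_{1i} := (1/2)v_x v_{t_i} − h_i, L_{1j} := (1/2)v_x v_{t_j} − h_j. Let 𝓢 ⊆ 𝓡 be the subring generated by the variables v_{x^α}, v_{x^α t_i}, v_{x^α t_j}, v_{x^α t_i t_j} (α ≥ 0), and let σ: 𝓢 → ℝ[v_{x^α} : α ≥ 0] be the ℝ-algebra homomorphism fixing each v_{x^α} and sending v_{x^α t_i} ↦ D_x^α(g_i), v_{x^α t_j} ↦ D_x^α(g_j), and v_{x^α t_i t_j} ↦ D_x^α( Σ_{β≥1} (∂g_i/∂v_{x^β})·D_x^β(g_j) ) (substitution of the evolution equations v_{t_i} = g_i, v_{t_j} = g_j). Suppose there exists L_{ij} ∈ 𝓢 such that σ( D_j(L_{1i}) − D_i(L_{1j}) + D_x(L_{ij}) ) = 0, i.e. the Lagrangian two-form is closed on solutions. Then the Hamiltonians are in involution: {∫h_i, ∫h_j} = 0, i.e. D_x(δh_i/δv_x)·(δh_j/δv_x) lies in the image of D_x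 on ℝ[v_{x^α} : α ≥ 0]. -/

import Mathlib

open MvPolynomial

noncomputable section

/-- The ring `𝓡` of differential polynomials of a field `v` in independent variables
`t_1, …, t_N`: the polynomial ring over `ℝ` in commuting variables `v_I` indexed by
multi-indices `I : Fin N → ℕ`. -/
abbrev DiffPoly (N : ℕ) := MvPolynomial (Fin N → ℕ) ℝ

/-- The total derivative `D_m`, determined by `D_m (v_I) = v_{I + e_m}`. -/
noncomputable def totalDeriv {N : ℕ} (m : Fin N) :
    Derivation ℝ (DiffPoly N) (DiffPoly N) :=
  MvPolynomial.mkDerivation ℝ fun I => X (I + Pi.single m 1)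

/-- The x-variational derivative `δf/δv_I = Σ_α (−1)^α D_x^α (∂f/∂v_{I+α·e_x})`,
where `x` is the coordinate direction playing the role of `t_1`. -/
noncomputable def varDeriv {N : ℕ} (x : Fin N) (I : Fin N → ℕ) (f : DiffPoly N) :
    DiffPoly N :=
  ∑ᶠ α : ℕ, (-1 : ℝ) ^ α • (fun p => totalDeriv x p)^[α] (pderiv (I + α • Pi.single x 1) f)

/-- `g := δh/δv_x`, the variational derivative with respect to `v_x`. -/
noncomputable def gOf {N : ℕ} (x : Fin N) (h : DiffPoly N) : DiffPoly N :=
  varDeriv x (Pi.single x 1) h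

/-- The value, on the variable `v_I`, of the substitution `σ` of the evolution equations
`v_{t_i} = g_i`, `v_{t_j} = g_j` (and `v_{t_i t_j} = D_{g_j} g_i`): it fixes `v_{x^α}` and
sends `v_{x^α t_i} ↦ D_x^α(g_i)`, `v_{x^α t_j} ↦ D_x^α(g_j)`,
`v_{x^α t_i t_j} ↦ D_x^α(Σ_{β≥1} (∂g_i/∂v_{x^β})·D_x^β(g_j))`; on variables outside the
subring `𝓢` its value is irrelevant and set to `0`. -/
noncomputable def substVal {N : ℕ} (x i j : Fin N) (Gi Gj Gij : ℕ → DiffPoly N) :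
    (Fin N → ℕ) → DiffPoly N := fun I =>
  if (∀ m, m ≠ x → m ≠ i → m ≠ j → I m = 0) then
    if I i = 0 ∧ I j = 0 then X I
    else if I i = 1 ∧ I j = 0 then Gi (I x)
    else if I i = 0 ∧ I j = 1 then Gj (I x)
    else if I i = 1 ∧ I j = 1 then Gij (I x)
    else 0
  else 0

/-! ### Auxiliary lemmas -/

section Aux

variable {N : ℕ} (x : Fin N)

lemma totalDeriv_X (m : Fin N) (I : Fin N → ℕ) :
    totalDeriv m (X I : DiffPoly N) = X (I + Pi.single m 1) :=
  mkDerivation_X ..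

lemma pderiv_X' (I J : Fin N → ℕ) :
    pderiv I (X J : DiffPoly N) = if I = J then 1 else 0 := by
  rw [pderiv_X]
  simp only [Pi.single_apply]
  exact if_congr ⟨fun h => h.symm, fun h => h.symm⟩ rfl rfl

/-- support of `J ↦ pderiv J f` is finite. -/
lemma pderiv_support_finite (f : DiffPoly N) :
    (Function.support fun J => (pderiv J f : DiffPoly N)).Finite := by
  apply Set.Finite.subset f.vars.finite_toSet
  intro J hJ
  simp only [Function.mem_support] at hJ
  by_contra h
  exact hJ (pderiv_eq_zero_of_notMem_vars (by simpa using h))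

lemma support_comp_finite (f : DiffPoly N) {ι : Type*} (g : ι → (Fin N → ℕ))
    (F : ι → DiffPoly N → DiffPoly N)
    (hg : Function.Injective g) (hF : ∀ a, F a 0 = 0) :
    (Function.support fun a : ι => F a (pderiv (g a) f)).Finite := by
  apply Set.Finite.subset ((pderiv_support_finite f).preimage hg.injOn)
  intro a ha
  simp only [Function.mem_support, Set.mem_preimage] at ha ⊢
  intro h0
  rw [h0, hF] at ha
  exact ha rfl

lemma single_inj : Function.Injective fun α : ℕ => α • (Pi.single x 1 : Fin N → ℕ) := by
  intro a b hab
  have := congrFun hab x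
  simpa using this

lemma add_single_inj (I : Fin N → ℕ) :
    Function.Injective fun α : ℕ => I + α • (Pi.single x 1 : Fin N → ℕ) := by
  intro a b hab
  have := congrFun hab x
  simpa using this

end Aux

section DerivFormula

variable {N : ℕ}

lemma deriv_eq_finsum (E : Derivation ℝ (DiffPoly N) (DiffPoly N)) (f : DiffPoly N) :
    E f = ∑ᶠ J : Fin N → ℕ, pderiv J f * E (X J) := by
  induction f using MvPolynomial.induction_on with
  | C r =>
      rw [show (C r : DiffPoly N) = algebraMap ℝ _ r from rfl, Derivation.map_algebraMap]
      rw [finsum_eq_zero_of_forall_eq_zero]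
      intro J
      simp [pderiv_C]
  | add p q hp hq =>
      rw [map_add, hp, hq, ← finsum_add_distrib]
      · congr 1; funext J; rw [map_add]; ring
      · exact (pderiv_support_finite p).subset (by
          intro J hJ; simp only [Function.mem_support] at hJ ⊢
          intro h; exact hJ (by rw [h, zero_mul]))
      · exact (pderiv_support_finite q).subset (by
          intro J hJ; simp only [Function.mem_support] at hJ ⊢
          intro h; exact hJ (by rw [h, zero_mul]))
  | mul_X p n hp =>
      rw [Derivation.leibniz, smul_eq_mul, smul_eq_mul, hp]
      have h1 : (Function.support fun J => (pderiv J p * E (X J) : DiffPoly N)).Finite := by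
        apply (pderiv_support_finite p).subset
        intro J hJ; simp only [Function.mem_support] at hJ ⊢
        intro h; exact hJ (by rw [h, zero_mul])
      have key : ∀ J : Fin N → ℕ, pderiv J (p * X n) * E (X J)
          = (pderiv J p * E (X J)) * X n + (if J = n then p * E (X n) else 0) := by
        intro J
        rw [pderiv_mul, pderiv_X']
        by_cases h : J = n <;> simp [h] <;> ring
      calc p * E (X n) + X n * ∑ᶠ J, pderiv J p * E (X J)
          = (∑ᶠ J, (pderiv J p * E (X J)) * X n)
            + ∑ᶠ J : Fin N → ℕ, (if J = n then p * E (X n) else 0) := by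
            rw [finsum_eq_single (fun J : Fin N → ℕ => if J = n then p * E (X n) else 0) n
              (by intro b hb; simp [hb]), if_pos rfl, ← finsum_mul _ _]
            ring
        _ = ∑ᶠ J, pderiv J (p * X n) * E (X J) := by
            rw [← finsum_add_distrib]
            · exact finsum_congr fun J => (key J).symm
            · exact h1.subset (by
                intro J hJ; simp only [Function.mem_support] at hJ ⊢
                intro h; exact hJ (by rw [h, zero_mul]))
            · exact (Set.finite_singleton n).subset (by
                intro J hJ; simp only [Function.mem_support] at hJ
                by_contra h; simp only [Set.mem_singleton_iff] at h; exact hJ (if_neg h))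

end DerivFormula

section Closure

variable {N : ℕ} (x : Fin N)

/-- The subalgebra of polynomials in the `x`-derivatives of `v`. -/
def Rx : Subalgebra ℝ (DiffPoly N) :=
  Algebra.adjoin ℝ {q : DiffPoly N | ∃ α : ℕ, q = X (α • Pi.single x 1)}

lemma X_mem_Rx (α : ℕ) : (X (α • Pi.single x 1) : DiffPoly N) ∈ Rx x :=
  Algebra.subset_adjoin ⟨α, rfl⟩

lemma finsum_mem_subalgebra {ι : Type*} (S : Subalgebra ℝ (DiffPoly N))
    (f : ι → DiffPoly N) (h : ∀ a, f a ∈ S) : (∑ᶠ a, f a) ∈ S := by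
  by_cases hf : (Function.support f).Finite
  · rw [finsum_eq_sum f hf]
    exact Subalgebra.sum_mem S fun a _ => h a
  · rw [finsum_of_infinite_support hf]; exact Subalgebra.zero_mem S

lemma totalDeriv_mem_Rx {p : DiffPoly N} (hp : p ∈ Rx x) : totalDeriv x p ∈ Rx x := by
  induction hp using Algebra.adjoin_induction with
  | mem q hq =>
      obtain ⟨α, rfl⟩ := hq
      rw [totalDeriv_X]
      have : α • (Pi.single x 1 : Fin N → ℕ) + Pi.single x 1 = (α + 1) • Pi.single x 1 := by
        rw [succ_nsmul]
      rw [this]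
      exact X_mem_Rx x (α + 1)
  | algebraMap r => rw [Derivation.map_algebraMap]; exact Subalgebra.zero_mem _
  | add p q hp hq hp' hq' => rw [map_add]; exact Subalgebra.add_mem _ hp' hq'
  | mul p q hp hq hp' hq' =>
      rw [Derivation.leibniz, smul_eq_mul, smul_eq_mul]
      exact Subalgebra.add_mem _ (Subalgebra.mul_mem _ hp hq') (Subalgebra.mul_mem _ hq hp')

lemma iterate_totalDeriv_mem_Rx (α : ℕ) {p : DiffPoly N} (hp : p ∈ Rx x) :
    (fun p => totalDeriv x p)^[α] p ∈ Rx x := by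
  induction α generalizing p with
  | zero => exact hp
  | succ n ih => rw [Function.iterate_succ_apply]; exact ih (totalDeriv_mem_Rx x hp)

lemma pderiv_mem_Rx (J : Fin N → ℕ) {p : DiffPoly N} (hp : p ∈ Rx x) :
    (pderiv J p : DiffPoly N) ∈ Rx x := by
  induction hp using Algebra.adjoin_induction with
  | mem q hq =>
      obtain ⟨α, rfl⟩ := hq
      rw [pderiv_X']
      by_cases h : J = α • Pi.single x 1
      · rw [if_pos h]; exact Subalgebra.one_mem _
      · rw [if_neg h]; exact Subalgebra.zero_mem _
  | algebraMap r =>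
      rw [show (algebraMap ℝ (DiffPoly N)) r = C r from rfl, pderiv_C]
      exact Subalgebra.zero_mem _
  | add p q hp hq hp' hq' => rw [map_add]; exact Subalgebra.add_mem _ hp' hq'
  | mul p q hp hq hp' hq' =>
      rw [pderiv_mul]
      exact Subalgebra.add_mem _ (Subalgebra.mul_mem _ hp' hq) (Subalgebra.mul_mem _ hp hq')

lemma varDeriv_mem_Rx (I : Fin N → ℕ) {p : DiffPoly N} (hp : p ∈ Rx x) :
    varDeriv x I p ∈ Rx x := by
  apply finsum_mem_subalgebra
  intro α
  exact Subalgebra.smul_mem _ (iterate_totalDeriv_mem_Rx x α (pderiv_mem_Rx x _ hp)) _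

lemma gOf_mem_Rx {p : DiffPoly N} (hp : p ∈ Rx x) : gOf x p ∈ Rx x :=
  varDeriv_mem_Rx x _ hp

end Closure

section Vars

variable {N : ℕ} (x : Fin N)

/-- Variables of an element of the subalgebra generated by `v_{x^α}`, `α ≥ 1`. -/
lemma vars_subset_of_mem {h : DiffPoly N}
    (hd : h ∈ Algebra.adjoin ℝ
      {p : DiffPoly N | ∃ α : ℕ, 1 ≤ α ∧ p = X (α • Pi.single x 1)}) :
    (h.vars : Set (Fin N → ℕ)) ⊆ {J | ∃ α : ℕ, 1 ≤ α ∧ J = α • Pi.single x 1} := by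
  induction hd using Algebra.adjoin_induction with
  | mem q hq =>
      obtain ⟨α, hα, rfl⟩ := hq
      rw [vars_X]
      intro J hJ
      simp only [Finset.coe_singleton, Set.mem_singleton_iff] at hJ
      exact ⟨α, hα, hJ⟩
  | algebraMap r =>
      rw [show (algebraMap ℝ (DiffPoly N)) r = C r from rfl, vars_C]
      simp
  | add p q hp hq hp' hq' =>
      refine Set.Subset.trans ?_ (Set.union_subset hp' hq')
      intro J hJ
      have := vars_add_subset p q hJ
      simpa using this
  | mul p q hp hq hp' hq' =>
      refine Set.Subset.trans ?_ (Set.union_subset hp' hq')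
      intro J hJ
      have := vars_mul p q hJ
      simpa using this

lemma pderiv_eq_zero_of_mem {h : DiffPoly N}
    (hd : h ∈ Algebra.adjoin ℝ
      {p : DiffPoly N | ∃ α : ℕ, 1 ≤ α ∧ p = X (α • Pi.single x 1)})
    {J : Fin N → ℕ} (hJ : ∀ α : ℕ, 1 ≤ α → J ≠ α • Pi.single x 1) :
    (pderiv J h : DiffPoly N) = 0 := by
  apply pderiv_eq_zero_of_notMem_vars
  intro hmem
  obtain ⟨α, hα, hJ'⟩ := vars_subset_of_mem x hd hmem
  exact hJ α hα hJ'

lemma pderiv_zero_eq_zero_of_mem {h : DiffPoly N}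
    (hd : h ∈ Algebra.adjoin ℝ
      {p : DiffPoly N | ∃ α : ℕ, 1 ≤ α ∧ p = X (α • Pi.single x 1)}) :
    (pderiv (0 : Fin N → ℕ) h : DiffPoly N) = 0 := by
  apply pderiv_eq_zero_of_mem x hd
  intro α hα hcontra
  have := congrFun hcontra x
  simp at this
  omega

end Vars

section IBP

variable {N : ℕ} (x : Fin N)

/-- Remainder term for integration by parts. -/
def ibpR (x : Fin N) : ℕ → DiffPoly N → DiffPoly N → DiffPoly N
  | 0, _, _ => 0
  | (α + 1), f, c => f * (fun p => totalDeriv x p)^[α] c - ibpR x α (totalDeriv x f) c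

lemma ibpR_mem (α : ℕ) {f c : DiffPoly N} (hf : f ∈ Rx x) (hc : c ∈ Rx x) :
    ibpR x α f c ∈ Rx x := by
  induction α generalizing f with
  | zero => exact Subalgebra.zero_mem _
  | succ n ih =>
      exact Subalgebra.sub_mem _
        (Subalgebra.mul_mem _ hf (iterate_totalDeriv_mem_Rx x n hc))
        (ih (totalDeriv_mem_Rx x hf))

lemma ibpR_zero_left (α : ℕ) (c : DiffPoly N) : ibpR x α 0 c = 0 := by
  induction α with
  | zero => rfl
  | succ n ih => rw [ibpR, map_zero, ih, zero_mul, sub_zero]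

lemma ibp (α : ℕ) (f c : DiffPoly N) :
    f * (fun p => totalDeriv x p)^[α] c
      = (-1 : ℝ) ^ α • ((fun p => totalDeriv x p)^[α] f * c)
        + totalDeriv x (ibpR x α f c) := by
  induction α generalizing f with
  | zero => simp [ibpR]
  | succ n ih =>
      have hL : (fun p => totalDeriv x p)^[n + 1] c
          = totalDeriv x ((fun p => totalDeriv x p)^[n] c) :=
        Function.iterate_succ_apply' _ n c
      have hF : (fun p => totalDeriv x p)^[n] (totalDeriv x f)
          = (fun p => totalDeriv x p)^[n + 1] f :=
        (Function.iterate_succ_apply _ n f).symm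
      have hleib : totalDeriv x (f * (fun p => totalDeriv x p)^[n] c)
          = f * totalDeriv x ((fun p => totalDeriv x p)^[n] c)
            + (fun p => totalDeriv x p)^[n] c * totalDeriv x f := by
        rw [Derivation.leibniz, smul_eq_mul, smul_eq_mul]
      have ihf := ih (totalDeriv x f)
      rw [hL, ibpR, map_sub, hleib]
      rw [show (fun p => totalDeriv x p)^[n] c * totalDeriv x f
          = totalDeriv x f * (fun p => totalDeriv x p)^[n] c from mul_comm _ _, ihf, hF]
      rw [pow_succ, mul_smul, neg_one_smul, smul_neg]
      abel

end IBP

section Evol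

variable {N : ℕ} (x : Fin N)

/-- Evolutionary derivation with characteristic `c` (relevant only on `x`-variables). -/
def evol (c : DiffPoly N) : Derivation ℝ (DiffPoly N) (DiffPoly N) :=
  MvPolynomial.mkDerivation ℝ fun I =>
    if ∀ m, m ≠ x → I m = 0 then (fun p => totalDeriv x p)^[I x] c else 0

lemma evol_X_single (c : DiffPoly N) (α : ℕ) :
    evol x c (X (α • Pi.single x 1)) = (fun p => totalDeriv x p)^[α] c := by
  rw [evol, mkDerivation_X]
  rw [if_pos]
  · congr 1
    simp
  · intro m hm
    simp [Pi.single_apply, hm.symm]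

/-- The formula for `evol` on a polynomial in the `v_{x^α}`, `α ≥ 1`. -/
lemma evol_apply (c : DiffPoly N) {h : DiffPoly N}
    (hd : h ∈ Algebra.adjoin ℝ
      {p : DiffPoly N | ∃ α : ℕ, 1 ≤ α ∧ p = X (α • Pi.single x 1)}) :
    evol x c h = ∑ᶠ α : ℕ, pderiv (α • Pi.single x 1) h * (fun p => totalDeriv x p)^[α] c := by
  rw [deriv_eq_finsum]
  have hsupp : ∀ J : Fin N → ℕ, (J ∉ Set.range fun α : ℕ => α • (Pi.single x 1 : Fin N → ℕ)) →
      pderiv J h * evol x c (X J) = 0 := by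
    intro J hJ
    rw [pderiv_eq_zero_of_notMem_vars, zero_mul]
    intro hmem
    obtain ⟨α, _, rfl⟩ := vars_subset_of_mem x hd hmem
    exact hJ ⟨α, rfl⟩
  calc ∑ᶠ J : Fin N → ℕ, pderiv J h * evol x c (X J)
      = ∑ᶠ J ∈ Set.range fun α : ℕ => α • (Pi.single x 1 : Fin N → ℕ),
          pderiv J h * evol x c (X J) := by
        rw [← finsum_mem_univ]
        apply finsum_mem_inter_support_eq
        ext J
        simp only [Set.mem_inter_iff, Set.mem_univ, true_and, Function.mem_support]
        constructor
        · intro hJ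
          refine ⟨by_contra fun hc => hJ (hsupp J hc), hJ⟩
        · exact fun hJ => hJ.2
    _ = ∑ᶠ α : ℕ, pderiv (α • Pi.single x 1) h * evol x c (X (α • Pi.single x 1)) :=
        finsum_mem_range (single_inj x)
    _ = _ := by
        apply finsum_congr
        intro α
        rw [evol_X_single]

/-- Integration by parts for the evolutionary derivation. -/
lemma evol_ibp (c : DiffPoly N) {h : DiffPoly N}
    (hd : h ∈ Algebra.adjoin ℝ
      {p : DiffPoly N | ∃ α : ℕ, 1 ≤ α ∧ p = X (α • Pi.single x 1)}) :
    evol x c h = varDeriv x 0 h * c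
      + totalDeriv x (∑ᶠ α : ℕ, ibpR x α (pderiv (α • Pi.single x 1) h) c) := by
  have hfin1 : (Function.support fun α : ℕ =>
      ((-1 : ℝ) ^ α • ((fun p => totalDeriv x p)^[α] (pderiv (α • Pi.single x 1) h) * c)
        : DiffPoly N)).Finite := by
    apply support_comp_finite h (fun α : ℕ => α • (Pi.single x 1 : Fin N → ℕ))
      (fun α p => (-1 : ℝ) ^ α • ((fun p => totalDeriv x p)^[α] p * c)) (single_inj x)
    intro a; simp
  have hfin2 : (Function.support fun α : ℕ =>
      (totalDeriv x (ibpR x α (pderiv (α • Pi.single x 1) h) c) : DiffPoly N)).Finite := by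
    apply support_comp_finite h (fun α : ℕ => α • (Pi.single x 1 : Fin N → ℕ))
      (fun α p => totalDeriv x (ibpR x α p c)) (single_inj x)
    intro a; rw [ibpR_zero_left, map_zero]
  have hfin3 : (Function.support fun α : ℕ =>
      (ibpR x α (pderiv (α • Pi.single x 1) h) c : DiffPoly N)).Finite := by
    apply support_comp_finite h (fun α : ℕ => α • (Pi.single x 1 : Fin N → ℕ))
      (fun α p => ibpR x α p c) (single_inj x)
    intro a; rw [ibpR_zero_left]
  have hfin4 : (Function.support fun α : ℕ =>
      ((-1 : ℝ) ^ α • (fun p => totalDeriv x p)^[α] (pderiv ((0 : Fin N → ℕ) + α • Pi.single x 1) h)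
        : DiffPoly N)).Finite := by
    apply support_comp_finite h (fun α : ℕ => (0 : Fin N → ℕ) + α • (Pi.single x 1 : Fin N → ℕ))
      (fun α p => (-1 : ℝ) ^ α • (fun p => totalDeriv x p)^[α] p) (add_single_inj x 0)
    intro a; simp
  calc evol x c h
      = ∑ᶠ α : ℕ, pderiv (α • Pi.single x 1) h * (fun p => totalDeriv x p)^[α] c :=
        evol_apply x c hd
    _ = ∑ᶠ α : ℕ, ((-1 : ℝ) ^ α • ((fun p => totalDeriv x p)^[α] (pderiv (α • Pi.single x 1) h) * c)
          + totalDeriv x (ibpR x α (pderiv (α • Pi.single x 1) h) c)) :=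
        finsum_congr fun α => ibp x α _ c
    _ = (∑ᶠ α : ℕ, (-1 : ℝ) ^ α • ((fun p => totalDeriv x p)^[α] (pderiv (α • Pi.single x 1) h) * c))
          + ∑ᶠ α : ℕ, totalDeriv x (ibpR x α (pderiv (α • Pi.single x 1) h) c) :=
        finsum_add_distrib hfin1 hfin2
    _ = varDeriv x 0 h * c
          + totalDeriv x (∑ᶠ α : ℕ, ibpR x α (pderiv (α • Pi.single x 1) h) c) := by
        congr 1
        · rw [varDeriv, finsum_mul _ _]
          apply finsum_congr
          intro α
          rw [smul_mul_assoc]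
          congr 3
          rw [zero_add]
        · exact ((totalDeriv x).toLinearMap.toAddMonoidHom.map_finsum hfin3).symm

end Evol

section VarD

variable {N : ℕ} (x : Fin N)

lemma varDeriv_zero_eq_neg {h : DiffPoly N}
    (hd : h ∈ Algebra.adjoin ℝ
      {p : DiffPoly N | ∃ α : ℕ, 1 ≤ α ∧ p = X (α • Pi.single x 1)}) :
    varDeriv x 0 h = - totalDeriv x (gOf x h) := by
  have hfinG : (Function.support fun α : ℕ =>
      ((-1 : ℝ) ^ α • (fun p => totalDeriv x p)^[α]
        (pderiv (Pi.single x 1 + α • Pi.single x 1) h) : DiffPoly N)).Finite := by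
    apply support_comp_finite h
      (fun α : ℕ => (Pi.single x 1 : Fin N → ℕ) + α • (Pi.single x 1 : Fin N → ℕ))
      (fun α p => (-1 : ℝ) ^ α • (fun p => totalDeriv x p)^[α] p)
      (add_single_inj x _)
    intro a; simp
  have hD : totalDeriv x (gOf x h)
      = ∑ᶠ α : ℕ, (-1 : ℝ) ^ α • (fun p => totalDeriv x p)^[α + 1]
          (pderiv ((α + 1) • Pi.single x 1) h) := by
    rw [gOf, varDeriv]
    refine Eq.trans ((totalDeriv x).toLinearMap.toAddMonoidHom.map_finsum hfinG) ?_
    apply finsum_congr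
    intro α
    show totalDeriv x (_ • _) = _
    rw [Derivation.map_smul]
    congr 1
    rw [← Function.iterate_succ_apply' (fun p => totalDeriv x p)]
    congr 2
    rw [succ_nsmul, add_comm]
  set f : ℕ → DiffPoly N := fun α =>
    (-1 : ℝ) ^ α • (fun p => totalDeriv x p)^[α] (pderiv ((0 : Fin N → ℕ) + α • Pi.single x 1) h)
    with hf
  have hf0 : f 0 = 0 := by
    simp only [hf, zero_add, pow_zero, one_smul, zero_smul]
    exact pderiv_zero_eq_zero_of_mem x hd
  have hstep : ∀ β : ℕ, f (β + 1)
      = -((-1 : ℝ) ^ β • (fun p => totalDeriv x p)^[β + 1]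
          (pderiv ((β + 1) • Pi.single x 1) h)) := by
    intro β
    rw [hf]
    show ((-1 : ℝ) ^ (β + 1)) • _ = _
    rw [pow_succ, mul_smul, neg_one_smul, smul_neg, zero_add]
  calc varDeriv x 0 h = ∑ᶠ α : ℕ, f α := rfl
    _ = ∑ᶠ α ∈ Set.range Nat.succ, f α := by
        rw [← finsum_mem_univ]
        apply finsum_mem_inter_support_eq
        ext α
        simp only [Set.mem_inter_iff, Set.mem_univ, true_and, Function.mem_support]
        constructor
        · intro hα
          refine ⟨?_, hα⟩
          rcases α with _ | β
          · exact absurd hf0 hα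
          · exact ⟨β, rfl⟩
        · exact fun hα => hα.2
    _ = ∑ᶠ β : ℕ, f (β + 1) := finsum_mem_range Nat.succ_injective
    _ = ∑ᶠ β : ℕ, -((-1 : ℝ) ^ β • (fun p => totalDeriv x p)^[β + 1]
          (pderiv ((β + 1) • Pi.single x 1) h)) := finsum_congr hstep
    _ = - totalDeriv x (gOf x h) := by
        rw [hD, ← finsum_neg_distrib]

end VarD

section Subst

variable {N : ℕ} {x i j : Fin N} (hix : i ≠ x) (hjx : j ≠ x) (hij : i ≠ j)
variable (Gi Gj Gij : ℕ → DiffPoly N)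

include hix hjx hij

lemma sv_x (α : ℕ) :
    substVal x i j Gi Gj Gij (α • Pi.single x 1) = X (α • Pi.single x 1) := by
  rw [substVal, if_pos, if_pos]
  · constructor <;> simp [Pi.single_apply, hix.symm, hjx.symm]
  · intro m hmx hmi hmj
    simp [Pi.single_apply, Ne.symm hmx]

lemma sv_i (α : ℕ) :
    substVal x i j Gi Gj Gij (α • Pi.single x 1 + Pi.single i 1) = Gi α := by
  have hIi : (α • Pi.single x 1 + Pi.single i 1 : Fin N → ℕ) i = 1 := by
    simp [Pi.single_apply, hix.symm]
  have hIj : (α • Pi.single x 1 + Pi.single i 1 : Fin N → ℕ) j = 0 := by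
    simp [Pi.single_apply, hjx.symm, hij.symm]
  have hIx : (α • Pi.single x 1 + Pi.single i 1 : Fin N → ℕ) x = α := by
    simp [Pi.single_apply, hix]
  rw [substVal, if_pos, if_neg, if_pos ⟨hIi, hIj⟩, hIx]
  · rw [hIi, hIj]; simp
  · intro m hmx hmi hmj
    simp [Pi.single_apply, Ne.symm hmx, Ne.symm hmi]

lemma sv_j (α : ℕ) :
    substVal x i j Gi Gj Gij (α • Pi.single x 1 + Pi.single j 1) = Gj α := by
  have hIi : (α • Pi.single x 1 + Pi.single j 1 : Fin N → ℕ) i = 0 := by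
    simp [Pi.single_apply, hix.symm, hij]
  have hIj : (α • Pi.single x 1 + Pi.single j 1 : Fin N → ℕ) j = 1 := by
    simp [Pi.single_apply, hjx.symm]
  have hIx : (α • Pi.single x 1 + Pi.single j 1 : Fin N → ℕ) x = α := by
    simp [Pi.single_apply, hjx]
  rw [substVal, if_pos, if_neg, if_neg, if_pos ⟨hIi, hIj⟩, hIx]
  · rw [hIi, hIj]; simp
  · rw [hIi, hIj]; simp
  · intro m hmx hmi hmj
    simp [Pi.single_apply, Ne.symm hmx, Ne.symm hmj]

lemma sv_ij (α : ℕ) :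
    substVal x i j Gi Gj Gij (α • Pi.single x 1 + Pi.single i 1 + Pi.single j 1) = Gij α := by
  have hIi : (α • Pi.single x 1 + Pi.single i 1 + Pi.single j 1 : Fin N → ℕ) i = 1 := by
    simp [Pi.single_apply, hix.symm, hij.symm]
  have hIj : (α • Pi.single x 1 + Pi.single i 1 + Pi.single j 1 : Fin N → ℕ) j = 1 := by
    simp [Pi.single_apply, hjx.symm, hij]
  have hIx : (α • Pi.single x 1 + Pi.single i 1 + Pi.single j 1 : Fin N → ℕ) x = α := by
    simp [Pi.single_apply, hix, hjx]
  rw [substVal, if_pos, if_neg, if_neg, if_neg, if_pos ⟨hIi, hIj⟩, hIx]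
  · rw [hIi, hIj]; simp
  · rw [hIi, hIj]; simp
  · rw [hIi, hIj]; simp
  · intro m hmx hmi hmj
    simp [Pi.single_apply, Ne.symm hmx, Ne.symm hmi, Ne.symm hmj]

end Subst

section Phi

variable {N : ℕ} {x i j : Fin N} (hix : i ≠ x) (hjx : j ≠ x) (hij : i ≠ j)
variable (gi gj s : DiffPoly N)

/-- The substitution homomorphism `σ`. -/
def phi (x i j : Fin N) (gi gj s : DiffPoly N) : DiffPoly N →ₐ[ℝ] DiffPoly N :=
  aeval (substVal x i j
    (fun α => (fun p => totalDeriv x p)^[α] gi)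
    (fun α => (fun p => totalDeriv x p)^[α] gj)
    (fun α => (fun p => totalDeriv x p)^[α] s))

/-- The generating set of the subring `𝓢`. -/
def Sgen (x i j : Fin N) : Set (DiffPoly N) :=
  {p : DiffPoly N | ∃ α : ℕ,
    p = X (α • Pi.single x 1) ∨
    p = X (α • Pi.single x 1 + Pi.single i 1) ∨
    p = X (α • Pi.single x 1 + Pi.single j 1) ∨
    p = X (α • Pi.single x 1 + Pi.single i 1 + Pi.single j 1)}

include hix hjx hij

lemma phi_X_x (α : ℕ) : phi x i j gi gj s (X (α • Pi.single x 1)) = X (α • Pi.single x 1) := by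
  rw [phi, aeval_X, sv_x hix hjx hij]

lemma phi_X_i (α : ℕ) : phi x i j gi gj s (X (α • Pi.single x 1 + Pi.single i 1))
    = (fun p => totalDeriv x p)^[α] gi := by
  rw [phi, aeval_X, sv_i hix hjx hij]

lemma phi_X_j (α : ℕ) : phi x i j gi gj s (X (α • Pi.single x 1 + Pi.single j 1))
    = (fun p => totalDeriv x p)^[α] gj := by
  rw [phi, aeval_X, sv_j hix hjx hij]

lemma phi_X_ij (α : ℕ) : phi x i j gi gj s (X (α • Pi.single x 1 + Pi.single i 1 + Pi.single j 1))
    = (fun p => totalDeriv x p)^[α] s := by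
  rw [phi, aeval_X, sv_ij hix hjx hij]

lemma phi_fix {p : DiffPoly N} (hp : p ∈ Rx x) : phi x i j gi gj s p = p := by
  induction hp using Algebra.adjoin_induction with
  | mem q hq => obtain ⟨α, rfl⟩ := hq; exact phi_X_x hix hjx hij gi gj s α
  | algebraMap r => exact AlgHom.commutes _ r
  | add p q _ _ hp' hq' => rw [map_add, hp', hq']
  | mul p q _ _ hp' hq' => rw [map_mul, hp', hq']

lemma phi_mem (hgi : gi ∈ Rx x) (hgj : gj ∈ Rx x) (hs : s ∈ Rx x)
    {p : DiffPoly N} (hp : p ∈ Algebra.adjoin ℝ (Sgen x i j)) :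
    phi x i j gi gj s p ∈ Rx x := by
  induction hp using Algebra.adjoin_induction with
  | mem q hq =>
      obtain ⟨α, hq | hq | hq | hq⟩ := hq <;> subst hq
      · rw [phi_X_x hix hjx hij]; exact X_mem_Rx x α
      · rw [phi_X_i hix hjx hij]; exact iterate_totalDeriv_mem_Rx x α hgi
      · rw [phi_X_j hix hjx hij]; exact iterate_totalDeriv_mem_Rx x α hgj
      · rw [phi_X_ij hix hjx hij]; exact iterate_totalDeriv_mem_Rx x α hs
  | algebraMap r => rw [AlgHom.commutes]; exact Subalgebra.algebraMap_mem _ r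
  | add p q _ _ hp' hq' => rw [map_add]; exact Subalgebra.add_mem _ hp' hq'
  | mul p q _ _ hp' hq' => rw [map_mul]; exact Subalgebra.mul_mem _ hp' hq'

lemma phi_totalDeriv_x {p : DiffPoly N} (hp : p ∈ Algebra.adjoin ℝ (Sgen x i j)) :
    phi x i j gi gj s (totalDeriv x p) = totalDeriv x (phi x i j gi gj s p) := by
  induction hp using Algebra.adjoin_induction with
  | mem q hq =>
      obtain ⟨α, hq | hq | hq | hq⟩ := hq <;> subst hq <;> rw [totalDeriv_X]
      · rw [show α • (Pi.single x 1 : Fin N → ℕ) + Pi.single x 1 = (α + 1) • Pi.single x 1 from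
            (succ_nsmul _ _).symm,
          phi_X_x hix hjx hij, phi_X_x hix hjx hij, totalDeriv_X,
          succ_nsmul]
      · rw [show α • (Pi.single x 1 : Fin N → ℕ) + Pi.single i 1 + Pi.single x 1
            = (α + 1) • Pi.single x 1 + Pi.single i 1 by rw [succ_nsmul]; abel,
          phi_X_i hix hjx hij, phi_X_i hix hjx hij,
          Function.iterate_succ_apply']
      · rw [show α • (Pi.single x 1 : Fin N → ℕ) + Pi.single j 1 + Pi.single x 1
            = (α + 1) • Pi.single x 1 + Pi.single j 1 by rw [succ_nsmul]; abel,
          phi_X_j hix hjx hij, phi_X_j hix hjx hij,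
          Function.iterate_succ_apply']
      · rw [show α • (Pi.single x 1 : Fin N → ℕ) + Pi.single i 1 + Pi.single j 1 + Pi.single x 1
            = (α + 1) • Pi.single x 1 + Pi.single i 1 + Pi.single j 1 by rw [succ_nsmul]; abel,
          phi_X_ij hix hjx hij, phi_X_ij hix hjx hij,
          Function.iterate_succ_apply']
  | algebraMap r => rw [Derivation.map_algebraMap, map_zero, AlgHom.commutes,
      Derivation.map_algebraMap]
  | add p q _ _ hp' hq' => rw [map_add, map_add, hp', hq', map_add, map_add]
  | mul p q _ _ hp' hq' =>
      rw [Derivation.leibniz, smul_eq_mul, smul_eq_mul, map_add, map_mul, map_mul,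
        hp', hq', map_mul, Derivation.leibniz, smul_eq_mul, smul_eq_mul]

lemma phi_totalDeriv_j {p : DiffPoly N} (hp : p ∈ Rx x) :
    phi x i j gi gj s (totalDeriv j p) = evol x gj p := by
  induction hp using Algebra.adjoin_induction with
  | mem q hq =>
      obtain ⟨α, rfl⟩ := hq
      rw [totalDeriv_X, phi_X_j hix hjx hij, evol_X_single]
  | algebraMap r => rw [Derivation.map_algebraMap, map_zero, Derivation.map_algebraMap]
  | add p q _ _ hp' hq' => rw [map_add, map_add, hp', hq', map_add]
  | mul p q hp hq hp' hq' =>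
      rw [Derivation.leibniz, smul_eq_mul, smul_eq_mul, map_add, map_mul, map_mul,
        hp', hq', phi_fix hix hjx hij gi gj s hp, phi_fix hix hjx hij gi gj s hq,
        Derivation.leibniz, smul_eq_mul, smul_eq_mul]

lemma phi_totalDeriv_i {p : DiffPoly N} (hp : p ∈ Rx x) :
    phi x i j gi gj s (totalDeriv i p) = evol x gi p := by
  induction hp using Algebra.adjoin_induction with
  | mem q hq =>
      obtain ⟨α, rfl⟩ := hq
      rw [totalDeriv_X, phi_X_i hix hjx hij, evol_X_single]
  | algebraMap r => rw [Derivation.map_algebraMap, map_zero, Derivation.map_algebraMap]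
  | add p q _ _ hp' hq' => rw [map_add, map_add, hp', hq', map_add]
  | mul p q hp hq hp' hq' =>
      rw [Derivation.leibniz, smul_eq_mul, smul_eq_mul, map_add, map_mul, map_mul,
        hp', hq', phi_fix hix hjx hij gi gj s hp, phi_fix hix hjx hij gi gj s hq,
        Derivation.leibniz, smul_eq_mul, smul_eq_mul]

end Phi

/-- if the Lagrangian two-form is closed on solutions, i.e. there is
`L_{ij} ∈ 𝓢` with `σ(D_j(L_{1i}) − D_i(L_{1j}) + D_x(L_{ij})) = 0`, then the Hamiltonians
are in involution: `{∫h_i, ∫h_j} = 0`, i.e. `D_x(δh_i/δv_x)·(δh_j/δv_x)` lies in the image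
of `D_x` on `ℝ[v_{x^α}]`. -/
theorem stmt_17 (N : ℕ) (hN : 2 ≤ N) (x : Fin N) (hx : x = ⟨0, by omega⟩)
    (i j : Fin N) (hi : i ≠ x) (hj : j ≠ x) (hij : i ≠ j)
    (Hi Hj : DiffPoly N)
    (hdepi : Hi ∈ Algebra.adjoin ℝ
      {p : DiffPoly N | ∃ α : ℕ, 1 ≤ α ∧ p = X (α • Pi.single x 1)})
    (hdepj : Hj ∈ Algebra.adjoin ℝ
      {p : DiffPoly N | ∃ α : ℕ, 1 ≤ α ∧ p = X (α • Pi.single x 1)})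
    (hclosed : ∃ Lij ∈ Algebra.adjoin ℝ
        {p : DiffPoly N | ∃ α : ℕ,
          p = X (α • Pi.single x 1) ∨
          p = X (α • Pi.single x 1 + Pi.single i 1) ∨
          p = X (α • Pi.single x 1 + Pi.single j 1) ∨
          p = X (α • Pi.single x 1 + Pi.single i 1 + Pi.single j 1)},
      aeval (substVal x i j
          (fun α => (fun p => totalDeriv x p)^[α] (gOf x Hi))
          (fun α => (fun p => totalDeriv x p)^[α] (gOf x Hj))
          (fun α => (fun p => totalDeriv x p)^[α]
            (∑ᶠ β : ℕ, pderiv ((β + 1) • Pi.single x 1) (gOf x Hi) *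
              (fun p => totalDeriv x p)^[β + 1] (gOf x Hj))))
        (totalDeriv j ((1 / 2 : ℝ) • (X (Pi.single x 1) * X (Pi.single i 1)) - Hi)
          - totalDeriv i ((1 / 2 : ℝ) • (X (Pi.single x 1) * X (Pi.single j 1)) - Hj)
          + totalDeriv x Lij) = 0) :
    ∃ p ∈ Algebra.adjoin ℝ {q : DiffPoly N | ∃ α : ℕ, q = X (α • Pi.single x 1)},
      totalDeriv x p = totalDeriv x (gOf x Hi) * gOf x Hj := by
  obtain ⟨Lij, hLij, heq⟩ := hclosed
  -- abbreviations
  set gi := gOf x Hi with hgi_def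
  set gj := gOf x Hj with hgj_def
  set S : DiffPoly N := ∑ᶠ β : ℕ, pderiv ((β + 1) • Pi.single x 1) gi *
      (fun p => totalDeriv x p)^[β + 1] gj with hS_def
  -- memberships
  have hHiRx : Hi ∈ Rx x :=
    Algebra.adjoin_mono (fun p hp => by obtain ⟨α, _, hp⟩ := hp; exact ⟨α, hp⟩) hdepi
  have hHjRx : Hj ∈ Rx x :=
    Algebra.adjoin_mono (fun p hp => by obtain ⟨α, _, hp⟩ := hp; exact ⟨α, hp⟩) hdepj
  have hgiRx : gi ∈ Rx x := gOf_mem_Rx x hHiRx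
  have hgjRx : gj ∈ Rx x := gOf_mem_Rx x hHjRx
  have hSRx : S ∈ Rx x := by
    apply finsum_mem_subalgebra
    intro β
    exact Subalgebra.mul_mem _ (pderiv_mem_Rx x _ hgiRx) (iterate_totalDeriv_mem_Rx x _ hgjRx)
  have hLijS : Lij ∈ Algebra.adjoin ℝ (Sgen x i j) := hLij
  -- the substitution homomorphism
  have heq' : phi x i j gi gj S
      (totalDeriv j ((1 / 2 : ℝ) • (X (Pi.single x 1) * X (Pi.single i 1)) - Hi)
        - totalDeriv i ((1 / 2 : ℝ) • (X (Pi.single x 1) * X (Pi.single j 1)) - Hj)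
        + totalDeriv x Lij) = 0 := heq
  -- micro-computations of phi on variables
  have pXx : phi x i j gi gj S (X (Pi.single x 1)) = X (Pi.single x 1) := by
    simpa using phi_X_x hi hj hij gi gj S 1
  have pXi0 : phi x i j gi gj S (X (Pi.single i 1)) = gi := by
    simpa using phi_X_i hi hj hij gi gj S 0
  have pXj0 : phi x i j gi gj S (X (Pi.single j 1)) = gj := by
    simpa using phi_X_j hi hj hij gi gj S 0
  have pXij0 : phi x i j gi gj S (X (Pi.single i 1 + Pi.single j 1)) = S := by
    simpa using phi_X_ij hi hj hij gi gj S 0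
  have pXji0 : phi x i j gi gj S (X (Pi.single j 1 + Pi.single i 1)) = S := by
    rw [show (Pi.single j 1 + Pi.single i 1 : Fin N → ℕ)
      = Pi.single i 1 + Pi.single j 1 from add_comm _ _]
    exact pXij0
  have pXxj : phi x i j gi gj S (X (Pi.single x 1 + Pi.single j 1)) = totalDeriv x gj := by
    simpa using phi_X_j hi hj hij gi gj S 1
  have pXxi : phi x i j gi gj S (X (Pi.single x 1 + Pi.single i 1)) = totalDeriv x gi := by
    simpa using phi_X_i hi hj hij gi gj S 1
  -- expand the total derivatives of the Lagrangian pieces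
  have e1 : totalDeriv j ((1 / 2 : ℝ) • (X (Pi.single x 1) * X (Pi.single i 1)) - Hi)
      = (1 / 2 : ℝ) • (X (Pi.single x 1) * X (Pi.single i 1 + Pi.single j 1)
          + X (Pi.single i 1) * X (Pi.single x 1 + Pi.single j 1)) - totalDeriv j Hi := by
    rw [map_sub, Derivation.map_smul, Derivation.leibniz, smul_eq_mul, smul_eq_mul,
      totalDeriv_X, totalDeriv_X]
  have e2 : totalDeriv i ((1 / 2 : ℝ) • (X (Pi.single x 1) * X (Pi.single j 1)) - Hj)
      = (1 / 2 : ℝ) • (X (Pi.single x 1) * X (Pi.single j 1 + Pi.single i 1)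
          + X (Pi.single j 1) * X (Pi.single x 1 + Pi.single i 1)) - totalDeriv i Hj := by
    rw [map_sub, Derivation.map_smul, Derivation.leibniz, smul_eq_mul, smul_eq_mul,
      totalDeriv_X, totalDeriv_X]
  have c1 : phi x i j gi gj S
      (totalDeriv j ((1 / 2 : ℝ) • (X (Pi.single x 1) * X (Pi.single i 1)) - Hi))
      = (1 / 2 : ℝ) • (X (Pi.single x 1) * S + gi * totalDeriv x gj) - evol x gj Hi := by
    rw [e1, map_sub, map_smul, map_add, map_mul, map_mul, pXx, pXij0, pXi0, pXxj,
      phi_totalDeriv_j hi hj hij gi gj S hHiRx]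
  have c2 : phi x i j gi gj S
      (totalDeriv i ((1 / 2 : ℝ) • (X (Pi.single x 1) * X (Pi.single j 1)) - Hj))
      = (1 / 2 : ℝ) • (X (Pi.single x 1) * S + gj * totalDeriv x gi) - evol x gi Hj := by
    rw [e2, map_sub, map_smul, map_add, map_mul, map_mul, pXx, pXji0, pXj0, pXxi,
      phi_totalDeriv_i hi hj hij gi gj S hHjRx]
  have c3 : phi x i j gi gj S (totalDeriv x Lij) = totalDeriv x (phi x i j gi gj S Lij) :=
    phi_totalDeriv_x hi hj hij gi gj S hLijS
  -- the closedness equation, rewritten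
  have heq2 : (1 / 2 : ℝ) • (X (Pi.single x 1) * S + gi * totalDeriv x gj) - evol x gj Hi
      - ((1 / 2 : ℝ) • (X (Pi.single x 1) * S + gj * totalDeriv x gi) - evol x gi Hj)
      + totalDeriv x (phi x i j gi gj S Lij) = 0 := by
    rw [← c1, ← c2, ← c3, ← map_sub, ← map_add]
    exact heq'
  -- integration by parts
  set R1 : DiffPoly N := ∑ᶠ α : ℕ, ibpR x α (pderiv (α • Pi.single x 1) Hi) gj with hR1_def
  set R2 : DiffPoly N := ∑ᶠ α : ℕ, ibpR x α (pderiv (α • Pi.single x 1) Hj) gi with hR2_def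
  have ibp1 : evol x gj Hi = -(totalDeriv x gi) * gj + totalDeriv x R1 := by
    rw [evol_ibp x gj hdepi, varDeriv_zero_eq_neg x hdepi, neg_mul, ← hgi_def, ← hR1_def]
  have ibp2 : evol x gi Hj = -(totalDeriv x gj) * gi + totalDeriv x R2 := by
    rw [evol_ibp x gi hdepj, varDeriv_zero_eq_neg x hdepj, neg_mul, ← hgj_def, ← hR2_def]
  rw [ibp1, ibp2] at heq2
  -- memberships for remainders
  have hR1Rx : R1 ∈ Rx x := by
    apply finsum_mem_subalgebra
    intro α
    exact ibpR_mem x α (pderiv_mem_Rx x _ hHiRx) hgjRx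
  have hR2Rx : R2 ∈ Rx x := by
    apply finsum_mem_subalgebra
    intro α
    exact ibpR_mem x α (pderiv_mem_Rx x _ hHjRx) hgiRx
  have hphiLRx : phi x i j gi gj S Lij ∈ Rx x :=
    phi_mem hi hj hij gi gj S hgiRx hgjRx hSRx hLijS
  -- the antiderivative
  refine ⟨(1 / 2 : ℝ) • (gi * gj) + (R1 - R2 - phi x i j gi gj S Lij), ?_, ?_⟩
  · exact Subalgebra.add_mem _
      (Subalgebra.smul_mem _ (Subalgebra.mul_mem _ hgiRx hgjRx) _)
      (Subalgebra.sub_mem _ (Subalgebra.sub_mem _ hR1Rx hR2Rx) hphiLRx)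
  · have hC : (C (1 / 2 : ℝ) : DiffPoly N) + C (1 / 2 : ℝ) = 1 := by
      rw [← C_add]
      norm_num
    rw [map_add, Derivation.map_smul, Derivation.leibniz, smul_eq_mul, smul_eq_mul,
      map_sub, map_sub]
    simp only [smul_eq_C_mul] at heq2 ⊢
    linear_combination -heq2 + (gi * totalDeriv x gj) * hC
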